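/- A finite simple graph G with at least two vertices is 1-{1,2}-factor-critical if and only if |S| < |N_G(S)| for every nonempty independent set S ⊆ V(G). -/

import Mathlib

open Finset

/-- A `{1,2}`-factor of `G` : a spanning subgraph `H ≤ G` all of whose connected components
are regular of degree one or two, i.e. every vertex has degree 1 or 2 in `H` and any two
vertices in the same component of `H` have equal degree. -/
def SimpleGraph.Has12Factor {V : Type*} [Fintype V] (G : SimpleGraph V) : Prop :=
  ∃ H : SimpleGraph V, H ≤ G ∧
    (∀ v : V, (H.neighborSet v).ncard = 1 ∨ (H.neighborSet v).ncard = 2) ∧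
    (∀ u v : V, H.Reachable u v → (H.neighborSet u).ncard = (H.neighborSet v).ncard)

/-- `G` is `k`-`{1,2}`-factor-critical if deleting any set of exactly `k` vertices leaves
a graph having a `{1,2}`-factor. -/
def SimpleGraph.Is12FactorCritical {V : Type*} [Fintype V] [DecidableEq V]
    (G : SimpleGraph V) (k : ℕ) : Prop :=
  ∀ S : Finset V, S.card = k → (G.induce ((Sᶜ : Finset V) : Set V)).Has12Factor

lemma has12Factor_of_perm {W : Type*} [Fintype W] (G : SimpleGraph W) (σ : Equiv.Perm W)
    (hσ : ∀ v, G.Adj v (σ v)) : G.Has12Factor := by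
  classical
  set H : SimpleGraph W :=
    { Adj := fun u v => σ u = v ∨ σ v = u
      symm := ⟨by intro u v h; tauto⟩
      loopless := ⟨by intro u h; rcases h with h | h <;> exact (hσ u).ne' h⟩ } with hH
  have hnb : ∀ v, H.neighborSet v = {σ v, σ.symm v} := by
    intro v
    ext w
    simp only [SimpleGraph.mem_neighborSet, hH, Set.mem_insert_iff, Set.mem_singleton_iff]
    constructor
    · rintro (h | h)
      · exact Or.inl h.symm
      · exact Or.inr (by simp [← h])
    · rintro (h | h)
      · exact Or.inl h.symm
      · exact Or.inr (by simp [h])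
  have hd : ∀ v, (H.neighborSet v).ncard = if σ (σ v) = v then 1 else 2 := by
    intro v
    rw [hnb]
    by_cases h : σ (σ v) = v
    · have : σ.symm v = σ v := by
        apply σ.injective; simp [h]
      rw [this, Set.pair_eq_singleton, if_pos h, Set.ncard_singleton]
    · have : σ v ≠ σ.symm v := by
        intro he
        apply h
        have := congrArg σ he
        simpa using this
      rw [if_neg h, Set.ncard_pair this]
  have key : ∀ u v, H.Adj u v → (σ (σ u) = u ↔ σ (σ v) = v) := by
    intro u v h
    rcases h with h | h
    · subst h
      constructor
      · intro h2; exact congrArg σ h2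
      · intro h2; exact σ.injective h2
    · subst h
      constructor
      · intro h2; exact σ.injective h2
      · intro h2; exact congrArg σ h2
  refine ⟨H, ?_, ?_, ?_⟩
  · intro u v h
    rcases h with h | h
    · exact h ▸ hσ u
    · exact (h ▸ hσ v).symm
  · intro v
    rw [hd]
    split <;> simp
  · have hadj : ∀ u v, H.Adj u v →
        (H.neighborSet u).ncard = (H.neighborSet v).ncard := by
      intro u v h
      have hk := key u v h
      rw [hd, hd]
      split_ifs with h1 h2 h2 <;> tauto
    intro u v h
    obtain ⟨p⟩ := h
    induction p with
    | nil => rfl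
    | cons ha p ih => exact (hadj _ _ ha).trans ih

lemma card_le_biUnion_of_factor {W : Type*} [Fintype W] [DecidableEq W]
    (H : SimpleGraph W) [DecidableRel H.Adj]
    (hdeg : ∀ v, (H.neighborFinset v).card = 1 ∨ (H.neighborFinset v).card = 2)
    (hreg : ∀ u v, H.Adj u v → (H.neighborFinset u).card = (H.neighborFinset v).card)
    (S : Finset W) :
    S.card ≤ (S.biUnion (fun s => H.neighborFinset s)).card := by
  classical
  set T := S.biUnion (fun s => H.neighborFinset s) with hT
  have hmemT : ∀ s ∈ S, ∀ t, H.Adj s t → t ∈ T := by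
    intro s hs t h
    exact mem_biUnion.mpr ⟨s, hs, by simpa using h⟩
  have hE1 : ∀ s ∈ S, (H.neighborFinset s).card = ∑ t ∈ T, if H.Adj s t then 1 else 0 := by
    intro s hs
    rw [← Finset.card_filter]
    congr 1
    ext t
    simp only [mem_filter, SimpleGraph.mem_neighborFinset]
    exact ⟨fun h => ⟨hmemT s hs t h, h⟩, fun h => h.2⟩
  have hE : ∑ s ∈ S, (H.neighborFinset s).card ≤ ∑ t ∈ T, (H.neighborFinset t).card := by
    calc ∑ s ∈ S, (H.neighborFinset s).card
        = ∑ s ∈ S, ∑ t ∈ T, (if H.Adj s t then 1 else 0) := sum_congr rfl hE1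
      _ = ∑ t ∈ T, ∑ s ∈ S, (if H.Adj s t then 1 else 0) := Finset.sum_comm
      _ ≤ ∑ t ∈ T, (H.neighborFinset t).card := by
          apply sum_le_sum
          intro t _
          rw [← Finset.card_filter]
          apply card_le_card
          intro s hs
          simp only [mem_filter] at hs
          simpa using hs.2.symm
  have hlow : ∑ s ∈ S, (1 + if (H.neighborFinset s).card = 2 then 1 else 0)
      ≤ ∑ s ∈ S, (H.neighborFinset s).card := by
    apply sum_le_sum; intro s _
    rcases hdeg s with h | h <;> simp [h]
  have hup : ∑ t ∈ T, (H.neighborFinset t).card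
      ≤ ∑ t ∈ T, (1 + if (H.neighborFinset t).card = 2 then 1 else 0) := by
    apply sum_le_sum; intro t _
    rcases hdeg t with h | h <;> simp [h]
  have hsum : ∀ (A : Finset W), ∑ a ∈ A, (1 + if (H.neighborFinset a).card = 2 then 1 else 0)
      = A.card + (A.filter fun a => (H.neighborFinset a).card = 2).card := by
    intro A
    rw [Finset.sum_add_distrib, Finset.sum_const, smul_eq_mul, mul_one, Finset.card_filter]
  have hpart : ∀ (A : Finset W), (A.filter fun a => (H.neighborFinset a).card = 2).card
      + (A.filter fun a => (H.neighborFinset a).card = 1).card = A.card := by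
    intro A
    rw [← Finset.card_filter_add_card_filter_not (s := A)
      (p := fun a => (H.neighborFinset a).card = 2)]
    congr 1
    apply congrArg
    apply Finset.filter_congr
    intro a _
    rcases hdeg a with h | h <;> simp [h]
  have hinj : (S.filter fun s => (H.neighborFinset s).card = 1).card
      ≤ (T.filter fun t => (H.neighborFinset t).card = 1).card := by
    set f : W → W := fun s => if h : (H.neighborFinset s).Nonempty then h.choose else s with hf
    have hfmem : ∀ s, (H.neighborFinset s).card = 1 → f s ∈ H.neighborFinset s := by
      intro s h
      have hne : (H.neighborFinset s).Nonempty := card_pos.mp (by omega)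
      simp only [hf, dif_pos hne]
      exact hne.choose_spec
    apply Finset.card_le_card_of_injOn f
    · intro s hs
      simp only [mem_coe, mem_filter] at hs ⊢
      have hadj : H.Adj s (f s) := by simpa using hfmem s hs.2
      refine ⟨hmemT s hs.1 _ hadj, ?_⟩
      rw [← hreg _ _ hadj, hs.2]
    · intro s hs s' hs' he
      simp only [coe_filter, Set.mem_setOf_eq] at hs hs'
      have h1 : H.Adj s (f s) := by simpa using hfmem s hs.2
      have h2 : H.Adj s' (f s') := by simpa using hfmem s' hs'.2
      rw [he] at h1
      have hdt : (H.neighborFinset (f s')).card = 1 := by rw [← hreg _ _ h2, hs'.2]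
      exact Finset.card_le_one.mp (le_of_eq hdt) s (by simpa using h1.symm) s'
        (by simpa using h2.symm)
  have e1 := hsum S
  have e2 := hsum T
  have p1 := hpart S
  have p2 := hpart T
  omega

/-- `G` with at least two vertices is `1`-`{1,2}`-factor-critical iff `|S| < |N_G(S)|` for
every nonempty independent set `S ⊆ V(G)`. -/
theorem stmt_4 {V : Type*} [Fintype V] [DecidableEq V] (G : SimpleGraph V)
    (hcard : 2 ≤ Fintype.card V) :
    G.Is12FactorCritical 1 ↔
      ∀ S : Set V, S.Nonempty → (∀ u ∈ S, ∀ v ∈ S, ¬ G.Adj u v) →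
        S.ncard < {u : V | ∃ v ∈ S, G.Adj v u}.ncard := by
  classical
  constructor
  · -- critical → strict neighborhood condition
    intro hcrit S hne hind
    set NS := {u : V | ∃ v ∈ S, G.Adj v u} with hNS
    by_cases hNSne : NS.Nonempty
    · obtain ⟨v, hv⟩ := hNSne
      have hvS : v ∉ S := by
        obtain ⟨x, hx, hadj⟩ := hv
        intro hvs; exact hind x hx v hvs hadj
      obtain ⟨H, hle, hdeg, hreg⟩ := hcrit {v} (Finset.card_singleton v)
      have hmemW : ∀ x : V, x ≠ v → x ∈ ((({v} : Finset V)ᶜ : Finset V) : Set V) := by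
        intro x hx; simp [hx]
      have hneW : ∀ x : ((({v} : Finset V)ᶜ : Finset V) : Set V), (x : V) ≠ v := by
        intro x
        have := x.2
        simp only [Finset.coe_compl, Set.mem_compl_iff, Finset.mem_coe,
          Finset.mem_singleton] at this
        exact this
      have hcd : ∀ x, (H.neighborFinset x).card = (H.neighborSet x).ncard := by
        intro x
        rw [SimpleGraph.neighborFinset_def, ← Set.ncard_eq_toFinset_card']
      set S' := Finset.univ.filter (fun a : ((({v} : Finset V)ᶜ : Finset V) : Set V) => (a : V) ∈ S) with hS'
      have hcount := card_le_biUnion_of_factor H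
        (fun x => by rw [hcd]; exact hdeg x)
        (fun a b h => by rw [hcd, hcd]; exact hreg a b h.reachable) S'
      -- |S| = |S'|
      have hScard : S.ncard = S'.card := by
        rw [Set.ncard_eq_toFinset_card' S]
        apply Finset.card_bij (fun (b : V) (hb : b ∈ S.toFinset) =>
          (⟨b, hmemW b (fun he => hvS (he ▸ Set.mem_toFinset.mp hb))⟩ :
            ((({v} : Finset V)ᶜ : Finset V) : Set V)))
        · intro b hb
          simp only [hS', mem_filter, Finset.mem_univ, true_and]
          exact Set.mem_toFinset.mp hb
        · intro b hb b' hb' he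
          simpa using congrArg Subtype.val he
        · intro a ha
          simp only [hS', mem_filter] at ha
          exact ⟨(a : V), Set.mem_toFinset.mpr ha.2, by simp⟩
      -- neighbors land in NS \ {v}
      have hNcard : (S'.biUnion (fun a => H.neighborFinset a)).card ≤ (NS \ {v}).ncard := by
        rw [Set.ncard_eq_toFinset_card' (NS \ {v})]
        apply Finset.card_le_card_of_injOn
          (fun x : ((({v} : Finset V)ᶜ : Finset V) : Set V) => (x : V))
        · intro x hx
          obtain ⟨a, ha, hax⟩ := mem_biUnion.mp hx
          simp only [hS', mem_filter] at ha
          have hadj : H.Adj a x := by simpa using hax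
          have hGadj : G.Adj (a : V) (x : V) := by
            have := hle hadj
            simpa using this
          simp only [Finset.mem_coe, Set.mem_toFinset, Set.mem_diff, Set.mem_singleton_iff]
          exact ⟨⟨(a : V), ha.2, hGadj⟩, hneW x⟩
        · intro x _ y _ he
          exact Subtype.ext he
      have h1 : (NS \ {v}).ncard + 1 = NS.ncard :=
        Set.ncard_diff_singleton_add_one hv (Set.toFinite _)
      omega
    · exfalso
      obtain ⟨s, hs⟩ := hne
      have hno : ∀ u, ¬ G.Adj s u := by
        intro u h
        exact hNSne ⟨u, s, hs, h⟩
      obtain ⟨v, hvne⟩ := Fintype.exists_ne_of_one_lt_card (by omega) s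
      obtain ⟨H, hle, hdeg, _⟩ := hcrit {v} (Finset.card_singleton v)
      have hsv : s ≠ v := Ne.symm hvne
      have hsW : s ∈ ((({v} : Finset V)ᶜ : Finset V) : Set V) := by simp [hsv]
      set a : ((({v} : Finset V)ᶜ : Finset V) : Set V) := ⟨s, hsW⟩ with ha
      have : (H.neighborSet a).Nonempty := by
        apply Set.nonempty_of_ncard_ne_zero
        rcases hdeg a with h | h <;> omega
      obtain ⟨x, hx⟩ := this
      have := hle hx
      exact hno x (by simpa [ha] using this)
  · -- neighborhood condition → critical
    intro hcond T hT1
    obtain ⟨v, rfl⟩ := Finset.card_eq_one.mp hT1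
    set W := ((({v} : Finset V)ᶜ : Finset V) : Set V) with hW
    set G' := G.induce W with hG'
    have hGadj : ∀ a b : W, G'.Adj a b ↔ G.Adj (a : V) (b : V) := by
      intro a b; simp [hG']
    have hneW : ∀ x : W, (x : V) ≠ v := by
      intro x
      have := x.2
      simp only [hW, Finset.coe_compl, Set.mem_compl_iff, Finset.mem_coe,
        Finset.mem_singleton] at this
      exact this
    have hmemW : ∀ x : V, x ≠ v → x ∈ W := by intro x hx; simp [hW, hx]
    have hall : ∀ A : Finset W, A.card ≤ (A.biUnion fun a => G'.neighborFinset a).card := by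
      intro A
      set N := A.biUnion fun a => G'.neighborFinset a with hN
      set p : W → Prop := fun a => ∀ b ∈ A, ¬ G'.Adj a b with hp
      set A₂ := A.filter p with hA2
      set A₁ := A.filter (fun a => ¬ p a) with hA1
      set N₂ := A₂.biUnion (fun a => G'.neighborFinset a) with hN2
      have hA1N : A₁ ⊆ N := by
        intro a ha
        simp only [hA1, mem_filter] at ha
        obtain ⟨haA, ha2⟩ := ha
        simp only [hp] at ha2
        push_neg at ha2
        obtain ⟨b, hbA, hadj⟩ := ha2
        exact mem_biUnion.mpr ⟨b, hbA, by simpa using hadj.symm⟩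
      have hN2N : N₂ ⊆ N := biUnion_subset_biUnion_of_subset_left _ (filter_subset _ _)
      have hdisj : Disjoint A₁ N₂ := by
        rw [Finset.disjoint_left]
        intro x hx1 hx2
        obtain ⟨a, ha, hax⟩ := mem_biUnion.mp hx2
        simp only [hA2, mem_filter, hp] at ha
        exact ha.2 x (filter_subset _ _ hx1) (by simpa using hax)
      have hA2N2 : A₂.card ≤ N₂.card := by
        rcases Finset.eq_empty_or_nonempty A₂ with he | hne
        · simp [he]
        · set SA : Set V := ↑(A₂.image (fun a : W => (a : V))) with hSA
          have hSAne : SA.Nonempty := by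
            simp only [hSA, coe_image, Set.image_nonempty, coe_nonempty]
            exact hne
          have hSAind : ∀ x ∈ SA, ∀ y ∈ SA, ¬ G.Adj x y := by
            intro x hx y hy hadj
            simp only [hSA, coe_image, Set.mem_image, mem_coe] at hx hy
            obtain ⟨a, ha, rfl⟩ := hx
            obtain ⟨b, hb, rfl⟩ := hy
            simp only [hA2, mem_filter, hp] at ha hb
            exact ha.2 b (hb.1) ((hGadj a b).mpr hadj)
          have hstrict := hcond SA hSAne hSAind
          set NSA := {u : V | ∃ x ∈ SA, G.Adj x u} with hNSA
          have hSAcard : SA.ncard = A₂.card := by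
            rw [hSA, Set.ncard_coe_finset, Finset.card_image_of_injective _ Subtype.val_injective]
          have hsubset : (NSA \ {v}).toFinset ⊆ N₂.image (fun x : W => (x : V)) := by
            intro u hu
            simp only [Set.mem_toFinset, Set.mem_diff, Set.mem_singleton_iff, hNSA,
              Set.mem_setOf_eq] at hu
            obtain ⟨⟨x, hx, hadj⟩, huv⟩ := hu
            simp only [hSA, coe_image, Set.mem_image, mem_coe] at hx
            obtain ⟨a, ha, rfl⟩ := hx
            have hu' : u ∈ W := hmemW u huv
            refine Finset.mem_image.mpr ⟨⟨u, hu'⟩, ?_, rfl⟩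
            exact mem_biUnion.mpr ⟨a, ha, by simp [(hGadj a ⟨u, hu'⟩).mpr hadj]⟩
          have hc1 : NSA.ncard ≤ (NSA \ {v}).ncard + 1 := by
            have := Set.ncard_le_ncard_diff_add_ncard NSA {v} (Set.toFinite _)
            simpa using this
          have hc2 : (NSA \ {v}).ncard ≤ N₂.card := by
            rw [Set.ncard_eq_toFinset_card' (NSA \ {v})]
            calc (NSA \ {v}).toFinset.card ≤ (N₂.image (fun x : W => (x : V))).card :=
                  Finset.card_le_card hsubset
              _ ≤ N₂.card := Finset.card_image_le
          omega
      have hcardA : A₁.card + A₂.card = A.card := by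
        rw [hA1, hA2]
        rw [add_comm]
        exact Finset.card_filter_add_card_filter_not p
      calc A.card = A₁.card + A₂.card := hcardA.symm
        _ ≤ A₁.card + N₂.card := by omega
        _ = (A₁ ∪ N₂).card := (Finset.card_union_of_disjoint hdisj).symm
        _ ≤ N.card := Finset.card_le_card (Finset.union_subset hA1N hN2N)
    obtain ⟨f, hfinj, hfmem⟩ :=
      (Finset.all_card_le_biUnion_card_iff_exists_injective (fun a : W => G'.neighborFinset a)).mp hall
    have hfbij : Function.Bijective f := Finite.injective_iff_bijective.mp hfinj
    exact has12Factor_of_perm G' (Equiv.ofBijective f hfbij)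
      (fun a => by simpa using hfmem a)
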